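/- Let t, d ∈ ℕ with d ≥ 1, let x_1,…,x_t ∈ [−1,1]^d, let w̄ ∈ ℝ^d, e_1,…,e_t ∈ ℝ, and set y_τ = x_τᵀw̄ + e_τ. For λ > 0 let ŵ_t be any minimizer over w ∈ ℝ^d of Σ_{τ=1}^t (y_τ − x_τᵀw)² + λ‖w‖₁. Let S̄ := {i : w̄_i ≠ 0} and Σ_t := Σ_{τ=1}^t x_τ x_τᵀ. Suppose ‖Σ_{τ=1}^t e_τ x_τ‖_∞ ≤ λ/4, and suppose Σ̄ ∈ ℝ^{d×d} is a positive semidefinite matrix with σ²_min(Σ̄, |S̄|) > 0 and ‖t^{-1}Σ_t − Σ̄‖_∞ ≤ σ²_min(Σ̄, |S̄|)/(32|S̄|), where ‖M‖_∞ denotes the entrywise maximum absolute value. Then ‖ŵ_t − w̄‖₁ ≤ 8λ|S̄| / (t · σ²_min(Σ̄, |S̄|)). -/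

import Mathlib

/-- The restricted minimum eigenvalue `σ²_min(M, s)` of a positive semidefinite matrix
`M ∈ ℝ^{d×d}` at sparsity level `s`: the infimum, over index sets `I` with `|I| ≤ s`
and vectors `β` with `β_I ≠ 0` and `‖β_{I^c}‖₁ ≤ 3‖β_I‖₁`, of `(βᵀMβ)/‖β_I‖₂²`. -/
noncomputable def restrictedMinEigenvalueSq {d : ℕ} (M : Matrix (Fin d) (Fin d) ℝ) (s : ℕ) : ℝ :=
  sInf {v : ℝ | ∃ (I : Finset (Fin d)) (β : Fin d → ℝ),
    I.card ≤ s ∧ (∃ i ∈ I, β i ≠ 0) ∧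
    (∑ i ∈ Iᶜ, |β i|) ≤ 3 * ∑ i ∈ I, |β i| ∧
    v = (∑ i, ∑ j, β i * M i j * β j) / (∑ i ∈ I, β i ^ 2)}

lemma lasso_quad_nonneg {d : ℕ} {M : Matrix (Fin d) (Fin d) ℝ} (h : M.PosSemidef) (β : Fin d → ℝ) :
    0 ≤ ∑ i, ∑ j, β i * M i j * β j := by
  have := h.dotProduct_mulVec_nonneg β
  simpa [dotProduct, Matrix.mulVec, Finset.mul_sum, mul_assoc] using this


set_option maxHeartbeats 1600000 in
/-- **ℓ₁-error bound for the Lasso estimator.**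
With covariates `x_τ ∈ [−1,1]^d`, responses `y_τ = x_τᵀw̄ + e_τ`, and `ŵ_t` a minimizer of
the Lasso objective with parameter `λ > 0`, if `‖Σ_τ e_τ x_τ‖_∞ ≤ λ/4` and if `Σ̄` is a
positive semidefinite matrix with `σ²_min(Σ̄, |S̄|) > 0` and
`‖t⁻¹ Σ_t − Σ̄‖_∞ ≤ σ²_min(Σ̄, |S̄|)/(32|S̄|)` entrywise (where `Σ_t = Σ_τ x_τ x_τᵀ` and
`S̄ = {i : w̄_i ≠ 0}`), then `‖ŵ_t − w̄‖₁ ≤ 8λ|S̄| / (t σ²_min(Σ̄, |S̄|))`. -/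
theorem lasso_l1_error_bound {t d : ℕ} (hd : 1 ≤ d)
    (x : Fin t → Fin d → ℝ) (hx : ∀ τ i, |x τ i| ≤ 1)
    (wbar : Fin d → ℝ) (e : Fin t → ℝ) (y : Fin t → ℝ)
    (hy : ∀ τ, y τ = (∑ i, x τ i * wbar i) + e τ)
    (lam : ℝ) (hlam : 0 < lam)
    (what : Fin d → ℝ)
    (hmin : ∀ w : Fin d → ℝ,
      (∑ τ, (y τ - ∑ i, x τ i * what i) ^ 2) + lam * ∑ i, |what i| ≤
        (∑ τ, (y τ - ∑ i, x τ i * w i) ^ 2) + lam * ∑ i, |w i|)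
    (Sbar : Finset (Fin d)) (hSbar : ∀ i, i ∈ Sbar ↔ wbar i ≠ 0)
    (hnoise : ∀ i, |∑ τ, e τ * x τ i| ≤ lam / 4)
    (Sigmabar : Matrix (Fin d) (Fin d) ℝ) (hpsd : Sigmabar.PosSemidef)
    (hrme : 0 < restrictedMinEigenvalueSq Sigmabar Sbar.card)
    (hclose : ∀ i j,
      |(∑ τ, x τ i * x τ j) / (t : ℝ) - Sigmabar i j| ≤
        restrictedMinEigenvalueSq Sigmabar Sbar.card / (32 * Sbar.card)) :
    ∑ i, |what i - wbar i| ≤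
      8 * lam * Sbar.card / (t * restrictedMinEigenvalueSq Sigmabar Sbar.card) := by
  classical
  set σ2 := restrictedMinEigenvalueSq Sigmabar Sbar.card with hσ2
  set Δ : Fin d → ℝ := fun i => what i - wbar i with hΔ
  have hΔi : ∀ i, what i - wbar i = Δ i := fun i => rfl
  simp only [hΔi]
  set s := Sbar.card with hscard
  set u := ∑ i ∈ Sbar, |Δ i| with hu
  set v := ∑ i ∈ Sbarᶜ, |Δ i| with hv
  set b := ∑ i ∈ Sbar, Δ i ^ 2 with hb
  set q := ∑ τ, (∑ i, x τ i * Δ i) ^ 2 with hq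
  have hu0 : 0 ≤ u := Finset.sum_nonneg fun i _ => abs_nonneg _
  have hv0 : 0 ≤ v := Finset.sum_nonneg fun i _ => abs_nonneg _
  have hb0 : 0 ≤ b := Finset.sum_nonneg fun i _ => sq_nonneg _
  have hq0 : 0 ≤ q := Finset.sum_nonneg fun i _ => sq_nonneg _
  -- s ≥ 1
  have hs1 : 1 ≤ s := by
    by_contra h
    have hs0 : s = 0 := by omega
    have hempty : σ2 = 0 := by
      rw [hσ2, restrictedMinEigenvalueSq]
      convert Real.sInf_empty using 2
      ext r
      simp only [Set.mem_setOf_eq, Set.mem_empty_iff_false, iff_false]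
      rintro ⟨I, β, hI, ⟨i, hi, -⟩, -⟩
      rw [hs0, Nat.le_zero, Finset.card_eq_zero] at hI
      subst hI
      exact absurd hi (Finset.notMem_empty i)
    linarith
  have hspos : (0:ℝ) < (s:ℝ) := by exact_mod_cast hs1
  -- split of l1 norm
  have hsplit : u + v = ∑ i, |Δ i| := Finset.sum_add_sum_compl Sbar _
  -- basic inequality
  have hz : ∀ τ, y τ - ∑ i, x τ i * what i = e τ - ∑ i, x τ i * Δ i := by
    intro τ
    rw [hy τ]
    simp only [hΔ, mul_sub, Finset.sum_sub_distrib]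
    ring
  have hzbar : ∀ τ, y τ - ∑ i, x τ i * wbar i = e τ := fun τ => by rw [hy τ]; ring
  have expand : ∑ τ, (y τ - ∑ i, x τ i * what i) ^ 2
      = (∑ τ, (e τ)^2) - 2 * (∑ τ, e τ * ∑ i, x τ i * Δ i) + q := by
    simp_rw [hz, sub_sq]
    rw [Finset.sum_add_distrib, Finset.sum_sub_distrib, Finset.mul_sum]
    simp_rw [mul_assoc]
    rfl
  -- noise term
  have hswap : ∑ τ, e τ * ∑ i, x τ i * Δ i = ∑ i, (∑ τ, e τ * x τ i) * Δ i := by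
    simp_rw [Finset.mul_sum, Finset.sum_mul, mul_assoc]
    exact Finset.sum_comm
  have hnz : ∑ τ, e τ * ∑ i, x τ i * Δ i ≤ lam / 4 * (u + v) := by
    rw [hswap, hsplit, Finset.mul_sum]
    apply Finset.sum_le_sum
    intro i _
    calc (∑ τ, e τ * x τ i) * Δ i ≤ |(∑ τ, e τ * x τ i) * Δ i| := le_abs_self _
      _ = |∑ τ, e τ * x τ i| * |Δ i| := abs_mul _ _
      _ ≤ lam / 4 * |Δ i| := mul_le_mul_of_nonneg_right (hnoise i) (abs_nonneg _)
  -- l1 norm comparison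
  have hl1 : (∑ i, |wbar i|) - (∑ i, |what i|) ≤ u - v := by
    rw [← Finset.sum_add_sum_compl Sbar (fun i => |wbar i|),
      ← Finset.sum_add_sum_compl Sbar (fun i => |what i|)]
    have h1 : (∑ i ∈ Sbar, |wbar i|) - ∑ i ∈ Sbar, |what i| ≤ u := by
      rw [← Finset.sum_sub_distrib, hu]
      apply Finset.sum_le_sum
      intro i _
      calc |wbar i| - |what i| ≤ |wbar i - what i| := abs_sub_abs_le_abs_sub _ _
        _ = |Δ i| := by rw [hΔ]; exact abs_sub_comm _ _
    have h2 : (∑ i ∈ Sbarᶜ, |wbar i|) - ∑ i ∈ Sbarᶜ, |what i| = -v := by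
      have hz0 : ∀ i ∈ Sbarᶜ, wbar i = 0 := fun i hi => by
        by_contra h
        exact (Finset.mem_compl.mp hi) ((hSbar i).mpr h)
      rw [Finset.sum_congr rfl (fun i hi => by rw [hz0 i hi, abs_zero]),
        Finset.sum_const_zero, hv]
      rw [Finset.sum_congr rfl (fun i hi => show |Δ i| = |what i| by
        rw [hΔ]; simp [hz0 i hi])]
      ring
    linarith
  -- key basic inequality
  have basic : q ≤ 3 * lam / 2 * u - lam / 2 * v := by
    have key := hmin wbar
    simp_rw [hzbar] at key
    rw [expand] at key
    have h3 : lam * ((∑ i, |wbar i|) - ∑ i, |what i|) ≤ lam * (u - v) :=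
      mul_le_mul_of_nonneg_left hl1 hlam.le
    nlinarith [hnz]
  -- cone condition
  have hcone : v ≤ 3 * u := by nlinarith
  by_cases hcase : ∀ i ∈ Sbar, Δ i = 0
  · -- trivial case: Δ vanishes on Sbar, hence everywhere
    have hu' : u = 0 := by
      rw [hu]
      exact Finset.sum_eq_zero fun i hi => by rw [hcase i hi, abs_zero]
    have hv' : v = 0 := le_antisymm (by linarith) hv0
    rw [← hsplit, hu', hv', add_zero]
    apply div_nonneg
    · exact mul_nonneg (mul_nonneg (by norm_num) hlam.le) (Nat.cast_nonneg _)
    · exact mul_nonneg (Nat.cast_nonneg t) hrme.le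
  · push_neg at hcase
    obtain ⟨i0, hi0S, hi0⟩ := hcase
    have hbpos : 0 < b :=
      Finset.sum_pos' (fun i _ => sq_nonneg _) ⟨i0, hi0S, by positivity⟩
    -- restricted eigenvalue applied to Δ
    have hmem : (∑ i, ∑ j, Δ i * Sigmabar i j * Δ j) / b ∈
        {r : ℝ | ∃ (I : Finset (Fin d)) (β : Fin d → ℝ),
          I.card ≤ s ∧ (∃ i ∈ I, β i ≠ 0) ∧
          (∑ i ∈ Iᶜ, |β i|) ≤ 3 * ∑ i ∈ I, |β i| ∧
          r = (∑ i, ∑ j, β i * Sigmabar i j * β j) / (∑ i ∈ I, β i ^ 2)} :=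
      ⟨Sbar, Δ, le_refl _, ⟨i0, hi0S, hi0⟩, by rw [← hu, ← hv]; linarith, by rw [← hb]⟩
    have hbdd : BddBelow {r : ℝ | ∃ (I : Finset (Fin d)) (β : Fin d → ℝ),
          I.card ≤ s ∧ (∃ i ∈ I, β i ≠ 0) ∧
          (∑ i ∈ Iᶜ, |β i|) ≤ 3 * ∑ i ∈ I, |β i| ∧
          r = (∑ i, ∑ j, β i * Sigmabar i j * β j) / (∑ i ∈ I, β i ^ 2)} := by
      refine ⟨0, fun r hr => ?_⟩
      obtain ⟨I, β, -, -, -, hr⟩ := hr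
      rw [hr]
      exact div_nonneg (lasso_quad_nonneg hpsd β)
        (Finset.sum_nonneg fun i _ => sq_nonneg _)
    have hle : σ2 ≤ (∑ i, ∑ j, Δ i * Sigmabar i j * Δ j) / b := by
      rw [hσ2, restrictedMinEigenvalueSq]
      exact csInf_le hbdd hmem
    have hQ : σ2 * b ≤ ∑ i, ∑ j, Δ i * Sigmabar i j * Δ j := by
      rw [← le_div_iff₀ hbpos]
      exact hle
    -- quadratic form identity for empirical covariance
    have hA : ∑ i, ∑ j, Δ i * (∑ τ, x τ i * x τ j) * Δ j = q := by
      calc ∑ i, ∑ j, Δ i * (∑ τ, x τ i * x τ j) * Δ j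
          = ∑ i, ∑ j, ∑ τ, Δ i * (x τ i * x τ j) * Δ j := by
            refine Finset.sum_congr rfl fun i _ => Finset.sum_congr rfl fun j _ => ?_
            rw [Finset.mul_sum, Finset.sum_mul]
        _ = ∑ i, ∑ τ, ∑ j, Δ i * (x τ i * x τ j) * Δ j :=
            Finset.sum_congr rfl fun i _ => Finset.sum_comm
        _ = ∑ τ, ∑ i, ∑ j, Δ i * (x τ i * x τ j) * Δ j := Finset.sum_comm
        _ = ∑ τ, (∑ i, x τ i * Δ i) ^ 2 := by
            refine Finset.sum_congr rfl fun τ _ => ?_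
            rw [sq, Finset.sum_mul_sum]
            exact Finset.sum_congr rfl fun i _ => Finset.sum_congr rfl fun j _ => by ring
        _ = q := by rw [hq]
    have hA' : ∑ i, ∑ j, Δ i * ((∑ τ, x τ i * x τ j) / (t:ℝ)) * Δ j = q / (t:ℝ) := by
      rw [← hA, Finset.sum_div]
      refine Finset.sum_congr rfl fun i _ => ?_
      rw [Finset.sum_div]
      exact Finset.sum_congr rfl fun j _ => by ring
    -- entrywise comparison
    have hE : ∀ i j, Δ i * (Sigmabar i j - (∑ τ, x τ i * x τ j) / (t:ℝ)) * Δ j ≤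
        |Δ i| * (σ2 / (32 * (s:ℝ))) * |Δ j| := by
      intro i j
      have h1 : |Sigmabar i j - (∑ τ, x τ i * x τ j) / (t:ℝ)| ≤ σ2 / (32 * (s:ℝ)) := by
        rw [abs_sub_comm]; exact hclose i j
      calc Δ i * (Sigmabar i j - (∑ τ, x τ i * x τ j) / (t:ℝ)) * Δ j
          ≤ |Δ i * (Sigmabar i j - (∑ τ, x τ i * x τ j) / (t:ℝ)) * Δ j| := le_abs_self _
        _ = |Δ i| * |Sigmabar i j - (∑ τ, x τ i * x τ j) / (t:ℝ)| * |Δ j| := by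
            rw [abs_mul, abs_mul]
        _ ≤ |Δ i| * (σ2 / (32 * (s:ℝ))) * |Δ j| :=
            mul_le_mul_of_nonneg_right
              (mul_le_mul_of_nonneg_left h1 (abs_nonneg _)) (abs_nonneg _)
    have hcomp : ∑ i, ∑ j, Δ i * Sigmabar i j * Δ j ≤
        q / (t:ℝ) + σ2 / (32 * (s:ℝ)) * (u + v) ^ 2 := by
      have hdiff : ∑ i, ∑ j, Δ i * Sigmabar i j * Δ j - q / (t:ℝ)
          = ∑ i, ∑ j, Δ i * (Sigmabar i j - (∑ τ, x τ i * x τ j) / (t:ℝ)) * Δ j := by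
        rw [← hA', ← Finset.sum_sub_distrib]
        refine Finset.sum_congr rfl fun i _ => ?_
        rw [← Finset.sum_sub_distrib]
        exact Finset.sum_congr rfl fun j _ => by ring
      have hbound : ∑ i, ∑ j, Δ i * (Sigmabar i j - (∑ τ, x τ i * x τ j) / (t:ℝ)) * Δ j
          ≤ σ2 / (32 * (s:ℝ)) * (u + v) ^ 2 := by
        calc ∑ i, ∑ j, Δ i * (Sigmabar i j - (∑ τ, x τ i * x τ j) / (t:ℝ)) * Δ j
            ≤ ∑ i, ∑ j, |Δ i| * (σ2 / (32 * (s:ℝ))) * |Δ j| :=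
              Finset.sum_le_sum fun i _ => Finset.sum_le_sum fun j _ => hE i j
          _ = σ2 / (32 * (s:ℝ)) * (u + v) ^ 2 := by
              rw [hsplit, sq, Finset.sum_mul_sum]
              rw [Finset.mul_sum]
              refine Finset.sum_congr rfl fun i _ => ?_
              rw [Finset.mul_sum]
              exact Finset.sum_congr rfl fun j _ => by ring
      linarith
    -- Cauchy-Schwarz on Sbar
    have hu2 : u ^ 2 ≤ (s:ℝ) * b := by
      have h := sq_sum_le_card_mul_sum_sq (s := Sbar) (f := fun i => |Δ i|)
      simp only [sq_abs] at h
      rw [hu, hb, hscard]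
      exact_mod_cast h
    -- error term is at most σ2 * b / 2
    have h16 : (u + v) ^ 2 ≤ 16 * ((s:ℝ) * b) := by nlinarith
    have heq : σ2 / (32 * (s:ℝ)) * (16 * ((s:ℝ) * b)) = σ2 * b / 2 := by
      field_simp
      ring
    have herr : σ2 / (32 * (s:ℝ)) * (u + v) ^ 2 ≤ σ2 * b / 2 := by
      rw [← heq]
      exact mul_le_mul_of_nonneg_left h16 (div_nonneg hrme.le (mul_pos (by norm_num) hspos).le)
    have hhalf : σ2 * b / 2 ≤ q / (t:ℝ) := by linarith
    -- t must be positive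
    have ht : 0 < t := by
      by_contra h
      have ht0 : (t:ℝ) = 0 := Nat.cast_eq_zero.mpr (by omega)
      rw [ht0, div_zero] at hhalf
      linarith [mul_pos hrme hbpos]
    have htpos : (0:ℝ) < (t:ℝ) := Nat.cast_pos.mpr ht
    have hql : σ2 * b / 2 * (t:ℝ) ≤ q := (le_div_iff₀ htpos).mp hhalf
    -- final computation
    rw [← hsplit, le_div_iff₀ (mul_pos htpos hrme)]
    clear_value σ2 u v b q Δ s
    have h5 : ((t:ℝ) * σ2 * (s:ℝ)) * (lam * (u + v)) ≤
        ((t:ℝ) * σ2 * (s:ℝ)) * (4 * lam * u - 2 * q) :=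
      mul_le_mul_of_nonneg_left (by linarith only [basic]) (mul_pos (mul_pos htpos hrme) hspos).le
    have h6 : ((t:ℝ) * σ2) ^ 2 * u ^ 2 ≤ ((t:ℝ) * σ2) ^ 2 * ((s:ℝ) * b) :=
      mul_le_mul_of_nonneg_left hu2 (sq_nonneg _)
    have h7 : ((t:ℝ) * σ2 * (s:ℝ)) * (σ2 * b / 2 * (t:ℝ)) ≤ ((t:ℝ) * σ2 * (s:ℝ)) * q :=
      mul_le_mul_of_nonneg_left hql (mul_pos (mul_pos htpos hrme) hspos).le
    nlinarith [sq_nonneg (u * (t:ℝ) * σ2 - 2 * lam * (s:ℝ)), mul_pos hlam hspos,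
      mul_pos htpos hrme, hu0, hv0]
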